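/- For all real x ≥ 1/2 and real y, one has |Γ(x)/Γ(x + iy)| ≤ e^(π|y|/2). -/

import Mathlib

open Complex Finset Filter Topology
lemma term_norm (x y : ℝ) (hx : 0 < x) (j : ℕ) :
    ‖(x:ℂ) + (y:ℂ)*Complex.I + (j:ℕ)‖ = Real.sqrt ((x+j)^2 + y^2) := by
  have : (x:ℂ) + (y:ℂ)*Complex.I + (j:ℕ) = ((x+j : ℝ):ℂ) + (y:ℝ)*Complex.I := by
    push_cast; ring
  rw [this, Complex.norm_add_mul_I]

lemma seqnorm (x y : ℝ) (hx : 0 < x) {n : ℕ} (hn : 1 ≤ n) :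
    ‖Complex.GammaSeq (x:ℂ) n / Complex.GammaSeq ((x:ℂ) + (y:ℂ)*Complex.I) n‖ =
      ∏ j ∈ Finset.range (n+1), (Real.sqrt ((x+j)^2 + y^2) / (x + j)) := by
  have hn0 : (0:ℝ) < n := by exact_mod_cast hn
  have h1 : ‖((n:ℂ)) ^ ((x:ℂ))‖ = (n:ℝ) ^ x := by
    rw [show ((n:ℂ)) = (((n:ℝ)):ℂ) by push_cast; rfl,
      Complex.norm_cpow_eq_rpow_re_of_pos hn0]
    simp
  have h2 : ‖((n:ℂ)) ^ ((x:ℂ) + (y:ℂ)*Complex.I)‖ = (n:ℝ) ^ x := by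
    rw [show ((n:ℂ)) = (((n:ℝ)):ℂ) by push_cast; rfl,
      Complex.norm_cpow_eq_rpow_re_of_pos hn0]
    simp
  simp only [Complex.GammaSeq, norm_div, norm_mul, norm_prod, h1, h2]
  rw [Finset.prod_div_distrib]
  have hA : ∀ j ∈ Finset.range (n+1), ‖(x:ℂ) + (j:ℕ)‖ = x + j := by
    intro j _
    rw [show (x:ℂ) + (j:ℕ) = ((x + j : ℝ):ℂ) by push_cast; ring, Complex.norm_real]
    exact Real.norm_of_nonneg (by positivity)
  have hB : ∀ j ∈ Finset.range (n+1), ‖(x:ℂ) + (y:ℂ)*Complex.I + (j:ℕ)‖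
      = Real.sqrt ((x+j)^2 + y^2) := fun j _ => term_norm x y hx j
  rw [Finset.prod_congr rfl hA, Finset.prod_congr rfl hB]
  have hfac : ‖((Nat.factorial n : ℕ) : ℂ)‖ ≠ 0 := by
    simp [Nat.factorial_ne_zero]
  have hpow : ((n:ℝ)) ^ x ≠ 0 := by positivity
  have hprod : ∏ j ∈ Finset.range (n+1), (x + (j:ℝ)) ≠ 0 := by positivity
  field_simp
open Complex Finset Filter Topology

lemma term_mono (y : ℝ) {b a : ℝ} (hb : 0 < b) (hba : b ≤ a) :
    Real.sqrt (a^2 + y^2) / a ≤ Real.sqrt (b^2 + y^2) / b := by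
  have ha : 0 < a := lt_of_lt_of_le hb hba
  rw [div_le_div_iff₀ ha hb]
  have h1 : Real.sqrt (a^2+y^2) * b = Real.sqrt ((a^2+y^2)*b^2) := by
    rw [Real.sqrt_mul (by positivity), Real.sqrt_sq hb.le]
  have h2 : Real.sqrt (b^2+y^2) * a = Real.sqrt ((b^2+y^2)*a^2) := by
    rw [Real.sqrt_mul (by positivity), Real.sqrt_sq ha.le]
  rw [h1, h2]
  apply Real.sqrt_le_sqrt
  nlinarith [sq_nonneg y, mul_self_le_mul_self hb.le hba]

lemma gamma_arg_ne (x y : ℝ) (hx : 0 < x) : ∀ m : ℕ, (x:ℂ) + (y:ℂ)*Complex.I ≠ -m := by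
  intro m h
  have := congrArg Complex.re h
  simp at this
  have : (0:ℝ) ≤ (m:ℝ) := m.cast_nonneg
  linarith

lemma tend_ratio (x y : ℝ) (hx : 0 < x) :
    Tendsto (fun n => ‖Complex.GammaSeq (x:ℂ) n / Complex.GammaSeq ((x:ℂ) + (y:ℂ)*Complex.I) n‖)
      atTop (𝓝 ‖Complex.Gamma (x:ℂ) / Complex.Gamma ((x:ℂ) + (y:ℂ)*Complex.I)‖) := by
  exact ((Complex.GammaSeq_tendsto_Gamma _).div (Complex.GammaSeq_tendsto_Gamma _)
    (Complex.Gamma_ne_zero (gamma_arg_ne x y hx))).norm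

lemma half_val (y : ℝ) :
    ‖Complex.Gamma (((1/2:ℝ)):ℂ) / Complex.Gamma (((1/2:ℝ):ℂ) + (y:ℂ)*Complex.I)‖^2
      = Real.cosh (Real.pi * y) := by
  set z : ℂ := ((1/2:ℝ):ℂ) + (y:ℂ)*Complex.I with hz
  have hconj : (starRingEnd ℂ) z = 1 - z := by
    rw [hz, map_add, map_mul, Complex.conj_ofReal, Complex.conj_ofReal, Complex.conj_I]
    push_cast; ring
  have hrefl := Complex.Gamma_mul_Gamma_one_sub z
  rw [← hconj, Complex.Gamma_conj] at hrefl
  have hsin : Complex.sin (↑Real.pi * z) = (Real.cosh (Real.pi * y) : ℂ) := by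
    have : ↑Real.pi * z = ↑Real.pi/2 + (↑Real.pi * y) * Complex.I := by
      rw [hz]; push_cast; ring
    rw [this, Complex.sin_add, Complex.sin_pi_div_two, Complex.cos_pi_div_two]
    rw [Complex.cos_mul_I]
    push_cast [Complex.ofReal_cosh]
    ring
  rw [hsin] at hrefl
  have hnormsq : (Complex.normSq (Complex.Gamma z) : ℂ)
      = (Real.pi : ℂ) / (Real.cosh (Real.pi * y) : ℂ) := by
    rw [← Complex.mul_conj]; exact hrefl
  have hcosh : (0:ℝ) < Real.cosh (Real.pi * y) := Real.cosh_pos _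
  have hnsq : Complex.normSq (Complex.Gamma z) = Real.pi / Real.cosh (Real.pi * y) := by
    have := hnormsq
    rw [show (Real.pi : ℂ) / (Real.cosh (Real.pi * y) : ℂ)
      = ((Real.pi / Real.cosh (Real.pi * y) : ℝ) : ℂ) by push_cast; ring] at this
    exact_mod_cast this
  have hg : ‖Complex.Gamma z‖^2 = Real.pi / Real.cosh (Real.pi * y) := by
    rw [Complex.sq_norm, hnsq]
  have hhalf : ‖Complex.Gamma (((1/2:ℝ)):ℂ)‖^2 = Real.pi := by
    rw [Complex.Gamma_ofReal, Complex.norm_real, Real.norm_eq_abs,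
      Real.Gamma_one_half_eq, _root_.abs_of_nonneg (Real.sqrt_nonneg _), Real.sq_sqrt Real.pi_pos.le]
  rw [norm_div, div_pow, hg, hhalf]
  field_simp

theorem gamma_ratio_bound (x y : ℝ) (hx : 1/2 ≤ x) :
    ‖Complex.Gamma (x : ℂ) / Complex.Gamma ((x : ℂ) + (y : ℂ) * Complex.I)‖ ≤
      Real.exp (Real.pi * |y| / 2) := by
  have hx0 : (0:ℝ) < x := lt_of_lt_of_le (by norm_num) hx
  have h2 : (0:ℝ) < (1/2:ℝ) := by norm_num
  have t1 := tend_ratio x y hx0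
  have t2 := tend_ratio (1/2) y h2
  have hev : ∀ᶠ n in atTop,
      ‖Complex.GammaSeq (x:ℂ) n / Complex.GammaSeq ((x:ℂ)+(y:ℂ)*Complex.I) n‖ ≤
      ‖Complex.GammaSeq ((1/2:ℝ):ℂ) n / Complex.GammaSeq (((1/2:ℝ):ℂ)+(y:ℂ)*Complex.I) n‖ := by
    filter_upwards [eventually_ge_atTop 1] with n hn
    rw [seqnorm x y hx0 hn, seqnorm (1/2) y h2 hn]
    apply Finset.prod_le_prod
    · intro j _; positivity
    · intro j _
      exact term_mono y (by positivity) (by push_cast; linarith)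
  have key := le_of_tendsto_of_tendsto t1 t2 hev
  have hval := half_val y
  have hcosh_le : Real.cosh (Real.pi*y) ≤ Real.exp (Real.pi*|y|) := by
    rw [Real.cosh_eq]
    have h1 : Real.exp (Real.pi*y) ≤ Real.exp (Real.pi*|y|) :=
      Real.exp_le_exp.2 (mul_le_mul_of_nonneg_left (le_abs_self y) Real.pi_pos.le)
    have h2' : Real.exp (-(Real.pi*y)) ≤ Real.exp (Real.pi*|y|) := by
      apply Real.exp_le_exp.2
      rw [← mul_neg]
      exact mul_le_mul_of_nonneg_left (neg_le_abs y) Real.pi_pos.le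
    linarith
  have hexp : (Real.exp (Real.pi*|y|/2))^2 = Real.exp (Real.pi*|y|) := by
    rw [sq, ← Real.exp_add]; ring_nf
  have hsq : ‖Complex.Gamma (((1/2:ℝ)):ℂ) /
      Complex.Gamma (((1/2:ℝ):ℂ) + (y:ℂ)*Complex.I)‖^2 ≤ (Real.exp (Real.pi*|y|/2))^2 := by
    rw [hval, hexp]; exact hcosh_le
  have hfin : ‖Complex.Gamma (((1/2:ℝ)):ℂ) /
      Complex.Gamma (((1/2:ℝ):ℂ) + (y:ℂ)*Complex.I)‖ ≤ Real.exp (Real.pi*|y|/2) := by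
    nlinarith [norm_nonneg (Complex.Gamma (((1/2:ℝ)):ℂ) /
      Complex.Gamma (((1/2:ℝ):ℂ) + (y:ℂ)*Complex.I)), Real.exp_pos (Real.pi*|y|/2)]
  exact le_trans key hfin
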